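/- Let l ≥ 1 and for i = 1, …, l let d_i > 0 and let ρu_i, μu_i, ρv_i, μv_i be positive reals satisfying ρu_i/ρv_i ≤ μv_i/μu_i for every i. Let f_i : ℝ → ℝ be f_i(x) = (1 − x/d_i)·(ρu_i·μu_i/2) + (x/d_i)·(ρv_i·μv_i/2). Then for every k with 1 ≤ k ≤ l, the partial-sum function x ↦ f_1(x) + ⋯ + f_k(x) is monotone nondecreasing on ℝ. (This is Proposition 3.3: if ρ(u_i)/ρ(v_i) ≤ μ(v_i)/μ(u_i) for every edge u_iv_i of a cut C, then under the linear assumption a family of parallel lines passing through C is a parallel bundle.) -/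

import Mathlib

/-- Proposition 3.3: if `ρuᵢ/ρvᵢ ≤ μvᵢ/μuᵢ` for every edge of a cut, then under the
linear assumption every partial sum of the angle functions
`f i x = (1 − x/dᵢ)·(ρuᵢ·μuᵢ/2) + (x/dᵢ)·(ρvᵢ·μvᵢ/2)` is monotone nondecreasing,
i.e. the family of parallel lines passing through the cut is a parallel bundle. -/
theorem parallel_bundle_of_edgewise (l : ℕ) (hl : 1 ≤ l) (d ρu μu ρv μv : ℕ → ℝ)
    (hd : ∀ i, 1 ≤ i → i ≤ l → 0 < d i)
    (hρu : ∀ i, 1 ≤ i → i ≤ l → 0 < ρu i)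
    (hμu : ∀ i, 1 ≤ i → i ≤ l → 0 < μu i)
    (hρv : ∀ i, 1 ≤ i → i ≤ l → 0 < ρv i)
    (hμv : ∀ i, 1 ≤ i → i ≤ l → 0 < μv i)
    (hineq : ∀ i, 1 ≤ i → i ≤ l → ρu i / ρv i ≤ μv i / μu i) :
    ∀ k, 1 ≤ k → k ≤ l →
      Monotone (fun x : ℝ =>
        ∑ i ∈ Finset.Icc 1 k,
          ((1 - x / d i) * (ρu i * μu i / 2) + (x / d i) * (ρv i * μv i / 2))) := by
  intro k hk hkl a b hab
  apply Finset.sum_le_sum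
  intro i hi
  simp only [Finset.mem_Icc] at hi
  have h1 := hi.1
  have h2 : i ≤ l := le_trans hi.2 hkl
  have hdi := hd i h1 h2
  have hAB : ρu i * μu i ≤ ρv i * μv i := by
    have := hineq i h1 h2
    rw [div_le_div_iff₀ (hρv i h1 h2) (hμu i h1 h2)] at this
    linarith
  have hx : (b - a) / d i * (ρv i * μv i / 2 - ρu i * μu i / 2) ≥ 0 := by
    apply mul_nonneg
    · exact div_nonneg (by linarith) hdi.le
    · linarith
  have hd' : d i ≠ 0 := ne_of_gt hdi
  field_simp at hx ⊢
  nlinarith [hx, hdi]
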